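/- For every X ∈ 𝔐₀ with X ∉ ℂI there exists σ ∈ P_ℤ such that T_σ(X) ≠ X; consequently the operator system 𝔐₀^{ex} := {X ∈ 𝔐₀ : T_σ(X) = X for every σ ∈ P_ℤ} equals ℂI. -/

import Mathlib

open scoped Classical

noncomputable section

variable {H : Type*} [NormedAddCommGroup H] [InnerProductSpace ℂ H] [CompleteSpace H]

def IsLeast' (i : ℤ) (A : Finset ℤ) : Prop := i ∈ A ∧ ∀ x ∈ A, i ≤ x

def LtAll (i : ℤ) (A : Finset ℤ) : Prop := ∀ x ∈ A, i < x

def MonotoneAnnOps (e : Finset ℤ → H) (a : ℤ → H →L[ℂ] H) : Prop :=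
  Orthonormal ℂ e ∧ (Submodule.span ℂ (Set.range e)).topologicalClosure = ⊤ ∧
  (∀ i A, (IsLeast' i A → a i (e A) = e (A.erase i)) ∧ (¬ IsLeast' i A → a i (e A) = 0)) ∧
  (∀ i A, (LtAll i A → star (a i) (e A) = e (insert i A)) ∧ (¬ LtAll i A → star (a i) (e A) = 0))

/-- The element `X_{(λ₁, λ₂)}` of the Hamel basis of `𝔐₀` attached to a pair of finite subsets of
`ℤ`: for `λ₁ = λ₂ = {i}` it is the π-form `aᵢ aᵢ†`, and otherwise it is the λ-form
`a†_{i_1} ⋯ a†_{i_m} a_{j_1} ⋯ a_{j_n}` where `λ₁ = {i_1 < ⋯ < i_m}`, `λ₂ = {j_n < ⋯ < j_1}`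
(the identity `I` when `λ₁ = λ₂ = ∅`). -/
def wordOp (a : ℤ → H →L[ℂ] H) (p : Finset ℤ × Finset ℤ) : H →L[ℂ] H :=
  if h : ∃ i : ℤ, p.1 = {i} ∧ p.2 = {i} then a h.choose * star (a h.choose)
  else ((p.1.sort (· ≤ ·)).map fun i => star (a i)).prod * ((p.2.sort (· ≤ ·)).reverse.map a).prod

/-- A permutation of `ℤ` is order preserving on a finite set if it is strictly increasing there. -/
def OrdPres (σ : Equiv.Perm ℤ) (s : Finset ℤ) : Prop := ∀ x ∈ s, ∀ y ∈ s, x < y → σ x < σ y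

/-- The map `T_σ`, expressed in the coordinates given by the Hamel basis
`{X_{(λ₁,λ₂)} : λ₁, λ₂ ⊆ ℤ finite}` of `𝔐₀`: it sends the basis vector indexed by `(λ₁, λ₂)` to
the one indexed by `(σ(λ₁), σ(λ₂))` if `σ` is order preserving on both `λ₁` and `λ₂`, and to `0`
otherwise. -/
def Tcoord (σ : Equiv.Perm ℤ) :
    ((Finset ℤ × Finset ℤ) →₀ ℂ) →ₗ[ℂ] ((Finset ℤ × Finset ℤ) →₀ ℂ) :=
  Finsupp.lsum ℂ fun p =>
    if OrdPres σ p.1 ∧ OrdPres σ p.2 then Finsupp.lsingle (p.1.image σ, p.2.image σ) else 0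

lemma wordOp_empty (a : ℤ → H →L[ℂ] H) : wordOp a (∅, ∅) = 1 := by
  rw [wordOp, dif_neg]
  · simp
  · rintro ⟨i, h, -⟩
    exact Finset.singleton_ne_empty i h.symm

theorem stmt2 (e : Finset ℤ → H) (a : ℤ → H →L[ℂ] H) (hma : MonotoneAnnOps e a)
    (hbasis : LinearIndependent ℂ (wordOp a))
    (hspan : Submodule.span ℂ (Set.range (wordOp a)) =
      Subalgebra.toSubmodule (StarAlgebra.adjoin ℂ (Set.range a)).toSubalgebra) :
    (∀ v : (Finset ℤ × Finset ℤ) →₀ ℂ,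
      (¬ ∃ c : ℂ, Finsupp.linearCombination ℂ (wordOp a) v = c • (1 : H →L[ℂ] H)) →
      ∃ σ : Equiv.Perm ℤ, {x : ℤ | σ x ≠ x}.Finite ∧
        Finsupp.linearCombination ℂ (wordOp a) (Tcoord σ v) ≠
          Finsupp.linearCombination ℂ (wordOp a) v) ∧
    {X : H →L[ℂ] H | ∃ v : (Finset ℤ × Finset ℤ) →₀ ℂ,
        Finsupp.linearCombination ℂ (wordOp a) v = X ∧
        ∀ σ : Equiv.Perm ℤ, {x : ℤ | σ x ≠ x}.Finite →
          Finsupp.linearCombination ℂ (wordOp a) (Tcoord σ v) = X} =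
      {X : H →L[ℂ] H | ∃ c : ℂ, X = c • 1} := by
  have hinj : Function.Injective ⇑(Finsupp.linearCombination ℂ (wordOp a)) :=
    hbasis
  have key : ∀ v : (Finset ℤ × Finset ℤ) →₀ ℂ,
      (¬ ∃ c : ℂ, Finsupp.linearCombination ℂ (wordOp a) v = c • (1 : H →L[ℂ] H)) →
      ∃ σ : Equiv.Perm ℤ, {x : ℤ | σ x ≠ x}.Finite ∧
        Finsupp.linearCombination ℂ (wordOp a) (Tcoord σ v) ≠
          Finsupp.linearCombination ℂ (wordOp a) v := by
    intro v hv
    set S : Finset ℤ := v.support.sup fun p => p.1 ∪ p.2 with hS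
    have hsub : ∀ p ∈ v.support, p.1 ∪ p.2 ⊆ S := fun p hp => by
      simpa using Finset.le_sup (f := fun q : Finset ℤ × Finset ℤ => q.1 ∪ q.2) hp
    have hSne : S.Nonempty := by
      by_contra h
      rw [Finset.not_nonempty_iff_eq_empty] at h
      apply hv
      refine ⟨v (∅, ∅), ?_⟩
      have hsupp : v.support ⊆ {((∅ : Finset ℤ), (∅ : Finset ℤ))} := by
        intro p hp
        have h2 := hsub p hp
        rw [h, Finset.subset_empty, Finset.union_eq_empty] at h2
        simp [Prod.ext_iff, h2.1, h2.2]
      have hv2 := Finsupp.support_subset_singleton.mp hsupp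
      conv_lhs => rw [hv2]
      rw [Finsupp.linearCombination_single, wordOp_empty]
    set m := S.max' hSne with hm
    have hmS : m ∈ S := S.max'_mem hSne
    have hm1 : m + 1 ∉ S := fun h => by have := S.le_max' _ h; omega
    set σ := Equiv.swap m (m + 1) with hσ
    have hfin : {x : ℤ | σ x ≠ x}.Finite := by
      apply Set.Finite.subset ((Set.finite_singleton (m + 1)).insert m)
      intro x hx
      by_contra hxx
      simp only [Set.mem_insert_iff, Set.mem_singleton_iff, not_or] at hxx
      exact hx (Equiv.swap_apply_of_ne_of_ne hxx.1 hxx.2)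
    have hord : ∀ A : Finset ℤ, A ⊆ S → OrdPres σ A := by
      intro A hA x hx y hy hxy
      have hxS : x ≤ m := S.le_max' x (hA hx)
      have hyS : y ≤ m := S.le_max' y (hA hy)
      have hx1 : σ x = x := Equiv.swap_apply_of_ne_of_ne (by omega) (by omega)
      rcases eq_or_ne y m with hym | hym
      · rw [hx1, hym, hσ, Equiv.swap_apply_left]; omega
      · rw [hx1, hσ, Equiv.swap_apply_of_ne_of_ne hym (by omega)]; exact hxy
    set f : Finset ℤ × Finset ℤ → Finset ℤ × Finset ℤ :=
      fun p => (p.1.image σ, p.2.image σ) with hfdef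
    have hfinj : Function.Injective f := by
      intro p q hpq
      rw [hfdef, Prod.ext_iff] at hpq
      exact Prod.ext (Finset.image_injective σ.injective hpq.1)
        (Finset.image_injective σ.injective hpq.2)
    have hT : Tcoord σ v = Finsupp.mapDomain f v := by
      rw [Tcoord, Finsupp.lsum_apply, Finsupp.mapDomain]
      refine Finsupp.sum_congr fun p hp => ?_
      rw [if_pos ⟨hord p.1 fun x hx => hsub p hp (Finset.mem_union_left _ hx),
            hord p.2 fun x hx => hsub p hp (Finset.mem_union_right _ hx)⟩]
      rfl
    obtain ⟨p₀, hp₀, hmp₀⟩ := Finset.mem_sup.mp (hS ▸ hmS)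
    have hvq : v (f p₀) = 0 := by
      by_contra h
      have hq : f p₀ ∈ v.support := Finsupp.mem_support_iff.mpr h
      apply hm1
      apply hsub _ hq
      show m + 1 ∈ p₀.1.image σ ∪ p₀.2.image σ
      rw [← Finset.image_union]
      exact Finset.mem_image.mpr ⟨m, hmp₀, by rw [hσ, Equiv.swap_apply_left]⟩
    refine ⟨σ, hfin, fun hEq => ?_⟩
    have heq2 : Tcoord σ v = v := hinj hEq
    have h1 : (Tcoord σ v) (f p₀) = v p₀ := by
      rw [hT, Finsupp.mapDomain_apply hfinj]
    rw [heq2, hvq] at h1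
    exact Finsupp.mem_support_iff.mp hp₀ h1.symm
  refine ⟨key, ?_⟩
  ext X
  simp only [Set.mem_setOf_eq]
  constructor
  · rintro ⟨v, hv, hall⟩
    by_contra hX
    obtain ⟨σ, hfin, hne⟩ := key v (by rw [hv]; exact fun ⟨c, hc⟩ => hX ⟨c, hc⟩)
    exact hne (by rw [hall σ hfin, hv])
  · rintro ⟨c, rfl⟩
    refine ⟨Finsupp.single (∅, ∅) c, ?_, ?_⟩
    · rw [Finsupp.linearCombination_single, wordOp_empty]
    · intro σ _
      have hTs : Tcoord σ (Finsupp.single (∅, ∅) c) = Finsupp.single (∅, ∅) c := by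
        rw [Tcoord, Finsupp.lsum_single,
          if_pos ⟨fun x hx => absurd hx (Finset.notMem_empty x),
            fun x hx => absurd hx (Finset.notMem_empty x)⟩]
        simp
      rw [hTs, Finsupp.linearCombination_single, wordOp_empty]

end
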